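/- For integers k ≥ r ≥ 2, integer ℓ ≥ 2 and integer m with 0 ≤ m ≤ k, g(k, ℓ) − g(k − m, ℓ) ≤ (m·r/(2^{r−1}·k))·C(k, r), where g(s, ℓ) = (ℓ − q)·C(⌊s/ℓ⌋, r) + q·C(⌈s/ℓ⌉, r) with q = s mod ℓ, and C(a, r) denotes the integer binomial coefficient. -/

import Mathlib

/-- `g(s,ℓ) = (ℓ-q)·C(⌊s/ℓ⌋,r) + q·C(⌈s/ℓ⌉,r)` with `q = s mod ℓ`. -/
def gBal (r s ℓ : ℕ) : ℕ :=
  (ℓ - s % ℓ) * Nat.choose (s / ℓ) r + (s % ℓ) * Nat.choose ((s + ℓ - 1) / ℓ) r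

lemma aux_div (ℓ A B : ℕ) (h : B < ℓ) : (ℓ * A + B) / ℓ = A := by
  rw [Nat.mul_add_div (by omega), Nat.div_eq_of_lt h]; omega

lemma aux_mod (ℓ A B : ℕ) (h : B < ℓ) : (ℓ * A + B) % ℓ = B := by
  rw [Nat.mul_add_mod, Nat.mod_eq_of_lt h]

lemma df_le (a t : ℕ) : 2 ^ t * Nat.descFactorial a t ≤ Nat.descFactorial (2 * a) t := by
  induction t with
  | zero => simp
  | succ t ih =>
      rw [Nat.descFactorial_succ, Nat.descFactorial_succ]
      calc 2 ^ (t + 1) * ((a - t) * Nat.descFactorial a t)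
          = (2 * (a - t)) * (2 ^ t * Nat.descFactorial a t) := by ring
        _ ≤ (2 * a - t) * Nat.descFactorial (2 * a) t :=
            Nat.mul_le_mul (by omega) ih

lemma choose_le_double (a t : ℕ) : 2 ^ t * Nat.choose a t ≤ Nat.choose (2 * a) t := by
  have h := df_le a t
  rw [Nat.descFactorial_eq_factorial_mul_choose, Nat.descFactorial_eq_factorial_mul_choose] at h
  have := Nat.factorial_pos t
  calc 2 ^ t * Nat.choose a t
      = (Nat.factorial t * (2 ^ t * Nat.choose a t)) / Nat.factorial t := by
        rw [Nat.mul_div_cancel_left _ this]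
    _ ≤ (Nat.factorial t * Nat.choose (2 * a) t) / Nat.factorial t :=
        Nat.div_le_div_right (by nlinarith)
    _ = Nat.choose (2 * a) t := Nat.mul_div_cancel_left _ this

lemma pow_choose_div_le (s ℓ t : ℕ) (hl : 2 ≤ ℓ) :
    2 ^ t * Nat.choose (s / ℓ) t ≤ Nat.choose s t := by
  have h1 : s / ℓ ≤ s / 2 := Nat.div_le_div_left hl (by omega)
  calc 2 ^ t * Nat.choose (s / ℓ) t ≤ 2 ^ t * Nat.choose (s / 2) t :=
        Nat.mul_le_mul_left _ (Nat.choose_le_choose _ h1)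
    _ ≤ Nat.choose (2 * (s / 2)) t := choose_le_double _ _
    _ ≤ Nat.choose s t := Nat.choose_le_choose _ (by omega)

lemma gBal_succ (r s ℓ : ℕ) (hr : 1 ≤ r) (hl : 2 ≤ ℓ) :
    gBal r (s + 1) ℓ = gBal r s ℓ + Nat.choose (s / ℓ) (r - 1) := by
  obtain ⟨q, t, ht, rfl⟩ : ∃ q t, t < ℓ ∧ s = ℓ * q + t :=
    ⟨s / ℓ, s % ℓ, Nat.mod_lt _ (by omega), (Nat.div_add_mod s ℓ).symm⟩
  have hq : (ℓ * q + t) / ℓ = q := aux_div ℓ q t ht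
  have hpascal : Nat.choose (q + 1) r = Nat.choose q (r - 1) + Nat.choose q r := by
    rw [show r = (r - 1) + 1 by omega]
    simpa using Nat.choose_succ_succ q (r - 1)
  unfold gBal
  rw [hq, aux_mod ℓ q t ht]
  rcases Nat.lt_or_ge (t + 1) ℓ with h | h
  · -- (s+1) has same quotient, mod t+1
    have e1 : ℓ * q + t + 1 = ℓ * q + (t + 1) := by ring
    rw [e1, aux_div ℓ q (t + 1) h, aux_mod ℓ q (t + 1) h]
    have hd : ℓ * (q + 1) = ℓ * q + ℓ := by ring
    have e2 : ℓ * q + (t + 1) + ℓ - 1 = ℓ * (q + 1) + t := by omega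
    rw [e2, aux_div ℓ (q + 1) t ht]
    rcases Nat.eq_zero_or_pos t with rfl | htpos
    · have e3 : ℓ * q + 0 + ℓ - 1 = ℓ * q + (ℓ - 1) := by omega
      rw [e3, aux_div ℓ q (ℓ - 1) (by omega), hpascal]
      zify [Nat.le_of_lt h, ht]
      ring
    · have e3 : ℓ * q + t + ℓ - 1 = ℓ * (q + 1) + (t - 1) := by omega
      rw [e3, aux_div ℓ (q + 1) (t - 1) (by omega), hpascal]
      zify [Nat.le_of_lt h, ht.le]
      ring
  · -- t + 1 = ℓ
    have hd : ℓ * (q + 1) = ℓ * q + ℓ := by ring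
    have htl : t = ℓ - 1 := by omega
    have e1 : ℓ * q + t + 1 = ℓ * (q + 1) + 0 := by omega
    rw [e1, aux_div ℓ (q + 1) 0 (by omega), aux_mod ℓ (q + 1) 0 (by omega)]
    have e3 : ℓ * q + t + ℓ - 1 = ℓ * (q + 1) + (t - 1) := by omega
    rw [e3, aux_div ℓ (q + 1) (t - 1) (by omega), hpascal, Nat.sub_zero]
    zify [ht.le]
    have : (t : ℤ) = ℓ - 1 := by omega
    rw [this]; ring

lemma key_nat (k r ℓ m : ℕ) (hr : 1 ≤ r) (hl : 2 ≤ ℓ) (hm : m ≤ k) :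
    2 ^ (r - 1) * gBal r k ℓ ≤
      2 ^ (r - 1) * gBal r (k - m) ℓ + m * Nat.choose (k - 1) (r - 1) := by
  induction m with
  | zero => simp
  | succ m ih =>
      have hm' : m ≤ k := by omega
      have e : k - m = (k - (m + 1)) + 1 := by omega
      have step := gBal_succ r (k - (m + 1)) ℓ hr hl
      rw [← e] at step
      have hb : 2 ^ (r - 1) * Nat.choose ((k - (m + 1)) / ℓ) (r - 1) ≤
          Nat.choose (k - 1) (r - 1) :=
        le_trans (pow_choose_div_le _ ℓ (r - 1) hl)
          (Nat.choose_le_choose _ (by omega))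
      calc 2 ^ (r - 1) * gBal r k ℓ
          ≤ 2 ^ (r - 1) * gBal r (k - m) ℓ + m * Nat.choose (k - 1) (r - 1) := ih hm'
        _ = 2 ^ (r - 1) * gBal r (k - (m + 1)) ℓ +
              2 ^ (r - 1) * Nat.choose ((k - (m + 1)) / ℓ) (r - 1) +
              m * Nat.choose (k - 1) (r - 1) := by rw [step]; ring
        _ ≤ 2 ^ (r - 1) * gBal r (k - (m + 1)) ℓ + (m + 1) * Nat.choose (k - 1) (r - 1) := by
            have e : (m + 1) * Nat.choose (k - 1) (r - 1)
                = m * Nat.choose (k - 1) (r - 1) + Nat.choose (k - 1) (r - 1) := by ring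
            omega

theorem gBal_diff_bound (k r ℓ m : ℕ) (hr : 2 ≤ r) (hk : r ≤ k) (hl : 2 ≤ ℓ)
    (hm : m ≤ k) :
    (gBal r k ℓ : ℝ) - (gBal r (k - m) ℓ : ℝ)
      ≤ (m : ℝ) * (r : ℝ) / (2 ^ (r - 1) * (k : ℝ)) * (Nat.choose k r : ℝ) := by
  have key := key_nat k r ℓ m (by omega) hl hm
  have keyR : (2 : ℝ) ^ (r - 1) * gBal r k ℓ ≤
      2 ^ (r - 1) * gBal r (k - m) ℓ + m * Nat.choose (k - 1) (r - 1) := by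
    exact_mod_cast key
  have hid : (k : ℝ) * Nat.choose (k - 1) (r - 1) = (Nat.choose k r : ℝ) * r := by
    have h := Nat.add_one_mul_choose_eq (k - 1) (r - 1)
    rw [show k - 1 + 1 = k by omega,
      show r - 1 + 1 = r by omega] at h
    exact_mod_cast h
  have hk0 : (0 : ℝ) < k := by exact_mod_cast (show 0 < k by omega)
  rw [show (m : ℝ) * r / (2 ^ (r - 1) * k) * Nat.choose k r
      = (m * r * Nat.choose k r) / (2 ^ (r - 1) * k) from by ring,
    le_div_iff₀ (by positivity)]
  have h4 := mul_le_mul_of_nonneg_right keyR hk0.le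
  have h3 : ((m : ℝ) * Nat.choose (k - 1) (r - 1)) * k = m * r * Nat.choose k r := by
    rw [mul_assoc, mul_comm ((Nat.choose (k - 1) (r - 1) : ℝ)) (k : ℝ), hid]; ring
  nlinarith [h4, h3]
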